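/- Let n ≥ 1, β : Fin n → ℝ, and let H be the symmetric matrix with H i j = β (max i j). If all the numbers β 0 − β 1, …, β (n−2) − β (n−1), β (n−1) are nonzero, then H is nondegenerate and its negative index of inertia (number of negative eigenvalues counted with multiplicity) equals the number of negative values among β 0 − β 1, …, β (n−2) − β (n−1), β (n−1). -/

import Mathlib

open Matrix

open Finset

lemma sylv_le (n : ℕ) (a b : Fin n → ℝ) (ha : ∀ i, a i ≠ 0) (hb : ∀ j, b j ≠ 0)
    (e : (Fin n → ℝ) ≃ₗ[ℝ] (Fin n → ℝ))
    (hid : ∀ x : Fin n → ℝ, ∑ i, a i * x i ^ 2 = ∑ j, b j * (e x j) ^ 2) :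
    (univ.filter fun i => a i < 0).card ≤ (univ.filter fun j => b j < 0).card := by
  classical
  set s : Finset (Fin n) := univ.filter fun i => a i < 0 with hs
  set u : Finset (Fin n) := univ.filter fun j => 0 < b j with hu
  have hpart : (univ.filter fun j => b j < 0).card + u.card = n := by
    have h := Finset.card_filter_add_card_filter_not (s := (univ : Finset (Fin n)))
      (p := fun j => b j < 0)
    simp only [Finset.card_univ, Fintype.card_fin] at h
    have h2 : (univ.filter fun j => ¬ b j < 0).card = u.card := by
      congr 1
      ext j
      simp only [hu, Finset.mem_filter, Finset.mem_univ, true_and, not_lt]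
      exact ⟨fun hh => hh.lt_of_ne (Ne.symm (hb j)), le_of_lt⟩
    omega
  -- main claim: s.card + u.card ≤ n
  have key : s.card + u.card ≤ n := by
    by_contra hlt
    push_neg at hlt
    set v : (↥s ⊕ ↥u) → (Fin n → ℝ) :=
      Sum.elim (fun i => (Pi.single (i : Fin n) (1:ℝ) : Fin n → ℝ))
        (fun j => e.symm ((Pi.single (j : Fin n) (1:ℝ) : Fin n → ℝ))) with hv
    have hnli : ¬ LinearIndependent ℝ v := by
      intro h
      have := h.fintype_card_le_finrank
      simp [Fintype.card_sum, Module.finrank_pi] at this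
      omega
    rw [Fintype.not_linearIndependent_iff] at hnli
    obtain ⟨g, hg0, i0, hi0⟩ := hnli
    set x : Fin n → ℝ := ∑ i : ↥s, g (Sum.inl i) • (Pi.single (i : Fin n) (1:ℝ) : Fin n → ℝ) with hxdef
    have hsplit : x + ∑ j : ↥u, g (Sum.inr j) • e.symm ((Pi.single (j : Fin n) (1:ℝ) : Fin n → ℝ)) = 0 := by
      rw [hxdef, ← hg0, Fintype.sum_sum_type]
      simp [hv]
    have hex : e x = ∑ j : ↥u, (-(g (Sum.inr j))) • (Pi.single (j : Fin n) (1:ℝ) : Fin n → ℝ) := by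
      have : x = -∑ j : ↥u, g (Sum.inr j) • e.symm ((Pi.single (j : Fin n) (1:ℝ) : Fin n → ℝ)) := by
        rw [eq_neg_iff_add_eq_zero]; exact hsplit
      rw [this, map_neg, map_sum]
      rw [← Finset.sum_neg_distrib]
      refine Finset.sum_congr rfl fun j _ => ?_
      simp
    -- coordinates
    have hxk : ∀ k : Fin n, x k = if hk : k ∈ s then g (Sum.inl ⟨k, hk⟩) else 0 := by
      intro k
      have : x k = ∑ i : ↥s, (if k = (i : Fin n) then g (Sum.inl i) else 0) := by
        rw [hxdef]
        simp only [Finset.sum_apply, Pi.smul_apply, Pi.single_apply, smul_eq_mul]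
        exact Finset.sum_congr rfl fun i _ => by by_cases h : k = (i : Fin n) <;> simp [h]
      rw [this]
      by_cases hk : k ∈ s
      · rw [Finset.sum_eq_single (⟨k, hk⟩ : ↥s)]
        · simp [hk]
        · intro i _ hne
          have : k ≠ (i : Fin n) := fun h => hne (Subtype.ext h.symm)
          simp [this]
        · simp
      · rw [dif_neg hk]
        apply Finset.sum_eq_zero
        intro i _
        have : k ≠ (i : Fin n) := fun h => hk (h ▸ i.2)
        simp [this]
    have hyk : ∀ k : Fin n, e x k = if hk : k ∈ u then -(g (Sum.inr ⟨k, hk⟩)) else 0 := by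
      intro k
      have : e x k = ∑ j : ↥u, (if k = (j : Fin n) then -(g (Sum.inr j)) else 0) := by
        rw [hex]
        simp only [Finset.sum_apply, Pi.smul_apply, Pi.single_apply, smul_eq_mul]
        exact Finset.sum_congr rfl fun j _ => by by_cases h : k = (j : Fin n) <;> simp [h]
      rw [this]
      by_cases hk : k ∈ u
      · rw [Finset.sum_eq_single (⟨k, hk⟩ : ↥u)]
        · simp [hk]
        · intro j _ hne
          have : k ≠ (j : Fin n) := fun h => hne (Subtype.ext h.symm)
          simp [this]
        · simp
      · rw [dif_neg hk]
        apply Finset.sum_eq_zero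
        intro j _
        have : k ≠ (j : Fin n) := fun h => hk (h ▸ j.2)
        simp [this]
    -- quadratic form value
    have hQ1 : ∑ i, a i * x i ^ 2 = ∑ i ∈ s, a i * x i ^ 2 := by
      refine (Finset.sum_subset (Finset.subset_univ s) ?_).symm
      intro i _ hi
      rw [hxk i, dif_neg hi]; ring
    have hQ2 : ∑ j, b j * (e x j) ^ 2 = ∑ j ∈ u, b j * (e x j) ^ 2 := by
      refine (Finset.sum_subset (Finset.subset_univ u) ?_).symm
      intro j _ hj
      rw [hyk j, dif_neg hj]; ring
    have hle : ∑ i ∈ s, a i * x i ^ 2 ≤ 0 := by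
      apply Finset.sum_nonpos
      intro i hi
      have hai : a i < 0 := (Finset.mem_filter.mp hi).2
      nlinarith [sq_nonneg (x i)]
    have hge : (0:ℝ) ≤ ∑ j ∈ u, b j * (e x j) ^ 2 := by
      apply Finset.sum_nonneg
      intro j hj
      have hbj : 0 < b j := (Finset.mem_filter.mp hj).2
      nlinarith [sq_nonneg (e x j)]
    have heq : ∑ i ∈ s, a i * x i ^ 2 = ∑ j ∈ u, b j * (e x j) ^ 2 := by
      rw [← hQ1, ← hQ2]; exact hid x
    have h0 : ∑ i ∈ s, a i * x i ^ 2 = 0 := le_antisymm hle (heq ▸ hge)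
    have h0' : ∑ j ∈ u, b j * (e x j) ^ 2 = 0 := by rw [← heq]; exact h0
    -- each coefficient is zero
    have hgl : ∀ i : ↥s, g (Sum.inl i) = 0 := by
      intro i
      have := (Finset.sum_eq_zero_iff_of_nonpos ?_).mp h0 i i.2
      · have hsq : (x (i : Fin n)) ^ 2 = 0 := by
          rcases mul_eq_zero.mp this with h | h
          · exact absurd h (ha _)
          · exact h
        have hx0 : x (i : Fin n) = 0 := pow_eq_zero_iff two_ne_zero |>.mp hsq
        rw [hxk] at hx0
        rw [dif_pos i.2] at hx0
        simpa using hx0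
      · intro i hi
        have hai : a i < 0 := (Finset.mem_filter.mp hi).2
        nlinarith [sq_nonneg (x i)]
    have hgr : ∀ j : ↥u, g (Sum.inr j) = 0 := by
      intro j
      have := (Finset.sum_eq_zero_iff_of_nonneg ?_).mp h0' j j.2
      · have hsq : (e x (j : Fin n)) ^ 2 = 0 := by
          rcases mul_eq_zero.mp this with h | h
          · exact absurd h (hb _)
          · exact h
        have hy0 : e x (j : Fin n) = 0 := pow_eq_zero_iff two_ne_zero |>.mp hsq
        rw [hyk] at hy0
        rw [dif_pos j.2] at hy0
        simpa using hy0
      · intro j hj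
        have hbj : 0 < b j := (Finset.mem_filter.mp hj).2
        nlinarith [sq_nonneg (e x j)]
    cases i0 with
    | inl i => exact hi0 (hgl i)
    | inr j => exact hi0 (hgr j)
  omega

lemma telescope_aux (g : ℕ → ℝ) : ∀ j m, m ≤ j →
    ∑ k ∈ Finset.Ico m j, (g k - g (k+1)) = g m - g j := by
  intro j
  induction j with
  | zero => intro m hm; interval_cases m; simp
  | succ j ih =>
    intro m hm
    rcases Nat.lt_or_ge m (j+1) with h | h
    · have hmj : m ≤ j := by omega
      rw [Finset.sum_Ico_succ_top hmj, ih m hmj]; ring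
    · have : m = j + 1 := by omega
      subst this; simp


/-- If the quantities `β 0 − β 1, …, β (n−2) − β (n−1), β (n−1)` are all nonzero,
then the matrix `H i j = β (max i j)` is nondegenerate and its negative index of inertia
(number of negative eigenvalues, with multiplicity) equals the number of negative values
among those quantities. -/
theorem flat_hessian_index (n : ℕ) (hn : 1 ≤ n) (β : Fin n → ℝ)
    (H : Matrix (Fin n) (Fin n) ℝ) (hH : ∀ i j, H i j = β (max i j))
    (hsym : H.IsHermitian)
    (D : Fin n → ℝ)
    (hD : ∀ k : Fin n, D k = if h : (k : ℕ) + 1 < n then β k - β ⟨(k : ℕ) + 1, h⟩ else β k)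
    (hne : ∀ k, D k ≠ 0) :
    H.det ≠ 0 ∧
    (Finset.univ.filter fun i : Fin n => hsym.eigenvalues i < 0).card =
      (Finset.univ.filter fun k : Fin n => D k < 0).card := by
  classical
  set g : ℕ → ℝ := fun k => if h : k < n then β ⟨k, h⟩ else 0 with hg
  have hgval : ∀ (k : ℕ) (h : k < n), g k = β ⟨k, h⟩ := fun k h => dif_pos h
  have hgval0 : ∀ k : ℕ, ¬ k < n → g k = 0 := fun k h => dif_neg h
  have hDg : ∀ k : Fin n, D k = g k - g ((k : ℕ) + 1) := by
    intro k
    rw [hD k]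
    by_cases h : (k : ℕ) + 1 < n
    · rw [dif_pos h, hgval _ k.isLt, hgval _ h]
    · rw [dif_neg h, hgval _ k.isLt, hgval0 _ h]
      simp
  have htail : ∀ m : Fin n, ∑ k : Fin n, (if m ≤ k then D k else 0) = β m := by
    intro m
    have h2 : ∑ k : Fin n, (if m ≤ k then D k else 0)
        = ∑ k ∈ Finset.range n, (if (m : ℕ) ≤ k then g k - g (k+1) else 0) := by
      rw [← Fin.sum_univ_eq_sum_range]
      refine Finset.sum_congr rfl fun k _ => ?_
      rw [hDg k]
      exact if_congr Fin.le_def rfl rfl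
    have h3 : (Finset.range n).filter (fun k => (m : ℕ) ≤ k) = Finset.Ico (m : ℕ) n := by
      ext k
      simp only [Finset.mem_filter, Finset.mem_range, Finset.mem_Ico]
      omega
    rw [h2, ← Finset.sum_filter, h3, telescope_aux g n (m : ℕ) m.isLt.le,
      hgval _ m.isLt, hgval0 n (lt_irrefl n)]
    simp
  set A : Matrix (Fin n) (Fin n) ℝ := Matrix.of (fun k i => if i ≤ k then (1:ℝ) else 0) with hA
  have hHA : H = Aᵀ * (Matrix.diagonal D * A) := by
    ext i j
    rw [Matrix.mul_apply, hH i j, ← htail (max i j)]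
    refine Finset.sum_congr rfl fun k _ => ?_
    rw [Matrix.transpose_apply, Matrix.diagonal_mul]
    by_cases h1 : i ≤ k <;> by_cases h2 : j ≤ k <;>
      simp [hA, h1, h2, max_le_iff] <;> tauto
  have hAtri : A.BlockTriangular OrderDual.toDual := by
    intro p q h
    have h' : ¬ q ≤ p := not_le.mpr h
    simp [hA, h']
  have hdetA : A.det = 1 := by
    rw [Matrix.det_of_lowerTriangular A hAtri]
    apply Finset.prod_eq_one
    intro k _
    simp [hA]
  have hdetH : H.det = ∏ k, D k := by
    rw [hHA, Matrix.det_mul, Matrix.det_mul, Matrix.det_transpose, hdetA, Matrix.det_diagonal]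
    ring
  have hdet0 : H.det ≠ 0 := by
    rw [hdetH]
    exact Finset.prod_ne_zero_iff.mpr fun k _ => hne k
  have heig : ∀ i, hsym.eigenvalues i ≠ 0 := by
    intro i h0
    have hd := hsym.det_eq_prod_eigenvalues
    simp only [RCLike.ofReal_real_eq_id, id_eq] at hd
    rw [hd] at hdet0
    exact hdet0 (Finset.prod_eq_zero (Finset.mem_univ i) h0)
  set W : Matrix (Fin n) (Fin n) ℝ := (hsym.eigenvectorUnitary : Matrix (Fin n) (Fin n) ℝ) with hW
  have hWW : W * Wᵀ = 1 := by
    have h := (Matrix.mem_unitaryGroup_iff).mp hsym.eigenvectorUnitary.2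
    simpa [Matrix.star_eq_conjTranspose,
      Matrix.conjTranspose_eq_transpose_of_trivial] using h
  have hspec : H = W * Matrix.diagonal hsym.eigenvalues * Wᵀ := by
    have h := hsym.spectral_theorem
    simpa [Matrix.star_eq_conjTranspose, Matrix.conjTranspose_eq_transpose_of_trivial,
      RCLike.ofReal_real_eq_id, Function.comp] using h
  -- quadratic form identities
  have hdiagQ : ∀ (d : Fin n → ℝ) (z : Fin n → ℝ),
      z ⬝ᵥ (Matrix.diagonal d) *ᵥ z = ∑ k, d k * z k ^ 2 := by
    intro d z
    simp only [dotProduct, Matrix.mulVec_diagonal]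
    refine Finset.sum_congr rfl fun k _ => by ring
  have hquadD : ∀ x : Fin n → ℝ, x ⬝ᵥ H *ᵥ x = ∑ k, D k * (A *ᵥ x) k ^ 2 := by
    intro x
    rw [hHA, ← Matrix.mulVec_mulVec, Matrix.dotProduct_mulVec, Matrix.vecMul_transpose,
      ← Matrix.mulVec_mulVec, hdiagQ]
  have hquadE : ∀ x : Fin n → ℝ,
      x ⬝ᵥ H *ᵥ x = ∑ i, hsym.eigenvalues i * (Wᵀ *ᵥ x) i ^ 2 := by
    intro x
    conv_lhs => rw [hspec]
    rw [mul_assoc, ← Matrix.mulVec_mulVec, Matrix.dotProduct_mulVec,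
      ← Matrix.mulVec_transpose, ← Matrix.mulVec_mulVec, hdiagQ]
  -- invertibility and the linear equivalence
  have invA : Invertible A := A.invertibleOfIsUnitDet (by rw [hdetA]; exact isUnit_one)
  have invW : Invertible Wᵀ := invertibleOfLeftInverse Wᵀ W hWW
  let eA : (Fin n → ℝ) ≃ₗ[ℝ] (Fin n → ℝ) := A.toLinearEquiv' invA
  let eW : (Fin n → ℝ) ≃ₗ[ℝ] (Fin n → ℝ) := (Wᵀ).toLinearEquiv' invW
  let e : (Fin n → ℝ) ≃ₗ[ℝ] (Fin n → ℝ) := eA.symm.trans eW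
  have heA : ∀ x, eA x = A *ᵥ x := fun x => rfl
  have heW : ∀ x, eW x = Wᵀ *ᵥ x := fun x => rfl
  have hid : ∀ y : Fin n → ℝ,
      ∑ k, D k * y k ^ 2 = ∑ i, hsym.eigenvalues i * (e y i) ^ 2 := by
    intro y
    have h3 : A *ᵥ (eA.symm y) = y := by
      rw [← heA]; exact eA.apply_symm_apply y
    have h1 := hquadD (eA.symm y)
    have h2 := hquadE (eA.symm y)
    rw [h3] at h1
    rw [← h1, h2]
    rfl
  have le1 := sylv_le n D hsym.eigenvalues hne heig e hid
  have le2 : (Finset.univ.filter fun i : Fin n => hsym.eigenvalues i < 0).card ≤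
      (Finset.univ.filter fun k : Fin n => D k < 0).card := by
    refine sylv_le n hsym.eigenvalues D heig hne e.symm fun y => ?_
    have := hid (e.symm y)
    rw [e.apply_symm_apply] at this
    exact this.symm
  exact ⟨hdet0, le_antisymm le2 le1⟩
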